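/- Fix integers $N_1,N_2\ge 1$, real charges $\{q_i\}_{i\ge0}$, and a path $S$ in $\mathbb{Z}^d$. Let $Q_N^x=\sum_{0\le i<N}q_i\mathbf{1}_{\{S_i=x\}}$, $H_N=\sum_x (Q_N^x)^2$, and define the shifted quantities $\tilde q_i=q_{N_1+i}$, $\tilde S_i=S_{N_1+i}-S_{N_1}$, $\tilde Q_N^x=\sum_{0\le i<N}\tilde q_i\mathbf{1}_{\{\tilde S_i=x\}}$, and $\tilde H_N=\sum_x(\tilde Q_N^x)^2$. Then $\frac{H_{N_1+N_2}}{N_1+N_2} \le \frac{H_{N_1}}{N_1} + \frac{\tilde H_{N_2}}{N_2}$. -/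

import Mathlib

open MeasureTheory Filter Finset Real
open scoped ENNReal

noncomputable section

/-- Total charge at site `x` for charges `q` and path `S`, among monomers `0 ≤ i < N`. -/
def Qof {d : ℕ} (N : ℕ) (q : ℕ → ℝ) (S : ℕ → Fin d → ℤ) (x : Fin d → ℤ) : ℝ :=
  ∑ i ∈ Finset.range N, if S i = x then q i else 0

/-- Energy `H_N = ∑_x (Q_N^x)²` (the sum over all of `ℤ^d` reduces to visited sites). -/
def Hof {d : ℕ} (N : ℕ) (q : ℕ → ℝ) (S : ℕ → Fin d → ℤ) : ℝ :=
  ∑ x ∈ (Finset.range N).image S, (Qof N q S x) ^ 2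

lemma Qof_eq_zero {d : ℕ} (N : ℕ) (q : ℕ → ℝ) (S : ℕ → Fin d → ℤ) (x : Fin d → ℤ)
    (hx : x ∉ (Finset.range N).image S) : Qof N q S x = 0 := by
  apply Finset.sum_eq_zero
  intro i hi
  rw [if_neg]
  intro h
  exact hx (Finset.mem_image.mpr ⟨i, hi, h⟩)

lemma Hof_eq_sum {d : ℕ} (N : ℕ) (q : ℕ → ℝ) (S : ℕ → Fin d → ℤ)
    (T : Finset (Fin d → ℤ)) (hT : (Finset.range N).image S ⊆ T) :
    Hof N q S = ∑ x ∈ T, (Qof N q S x) ^ 2 := by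
  refine Finset.sum_subset hT fun x _ hx => ?_
  rw [Qof_eq_zero N q S x hx]
  ring

lemma sq_div_add {a b n m : ℝ} (hn : 0 < n) (hm : 0 < m) :
    (a + b) ^ 2 / (n + m) ≤ a ^ 2 / n + b ^ 2 / m := by
  rw [div_add_div _ _ (ne_of_gt hn) (ne_of_gt hm), div_le_div_iff₀ (by linarith) (by positivity)]
  nlinarith [sq_nonneg (n * b - m * a)]

theorem energy_subadditive {d : ℕ} (N₁ N₂ : ℕ) (h₁ : 1 ≤ N₁) (h₂ : 1 ≤ N₂)
    (q : ℕ → ℝ) (S : ℕ → Fin d → ℤ) :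
    Hof (N₁ + N₂) q S / (N₁ + N₂ : ℝ) ≤
      Hof N₁ q S / (N₁ : ℝ) +
      Hof N₂ (fun i => q (N₁ + i)) (fun i => S (N₁ + i) - S N₁) / (N₂ : ℝ) := by
  set q' : ℕ → ℝ := fun i => q (N₁ + i)
  set S' : ℕ → Fin d → ℤ := fun i => S (N₁ + i) - S N₁
  set T : Finset (Fin d → ℤ) := (Finset.range (N₁ + N₂)).image S with hT
  have hn1 : (0 : ℝ) < N₁ := by exact_mod_cast h₁
  have hn2 : (0 : ℝ) < N₂ := by exact_mod_cast h₂
  -- Q split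
  have hQ : ∀ x, Qof (N₁ + N₂) q S x = Qof N₁ q S x + Qof N₂ q' S' (x - S N₁) := by
    intro x
    unfold Qof
    rw [Finset.sum_range_add]
    congr 1
    refine Finset.sum_congr rfl fun i _ => ?_
    have : S' i = x - S N₁ ↔ S (N₁ + i) = x := by
      simp only [S', sub_left_inj]
    simp [this, q']
  -- express the three H's over common-ish index sets
  have hH : Hof (N₁ + N₂) q S = ∑ x ∈ T, (Qof (N₁ + N₂) q S x) ^ 2 :=
    Hof_eq_sum _ _ _ _ (Finset.Subset.refl _)
  have hH1 : Hof N₁ q S = ∑ x ∈ T, (Qof N₁ q S x) ^ 2 := by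
    refine Hof_eq_sum _ _ _ _ ?_
    exact Finset.image_subset_image (Finset.range_subset_range.mpr (Nat.le_add_right _ _))
  have hH2 : Hof N₂ q' S' = ∑ x ∈ T, (Qof N₂ q' S' (x - S N₁)) ^ 2 := by
    have hinj : Set.InjOn (fun x : Fin d → ℤ => x - S N₁) T := fun a _ b _ h => by
      simpa [sub_left_inj] using h
    rw [← Finset.sum_image (f := fun y => (Qof N₂ q' S' y) ^ 2) hinj]
    refine Hof_eq_sum _ _ _ _ ?_
    intro y hy
    rcases Finset.mem_image.mp hy with ⟨i, hi, rfl⟩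
    refine Finset.mem_image.mpr ⟨S (N₁ + i), ?_, rfl⟩
    refine Finset.mem_image.mpr ⟨N₁ + i, ?_, rfl⟩
    rw [Finset.mem_range] at hi ⊢
    omega
  rw [hH, hH1, hH2, Finset.sum_div, Finset.sum_div, Finset.sum_div, ← Finset.sum_add_distrib]
  refine Finset.sum_le_sum fun x _ => ?_
  rw [hQ x]
  have := sq_div_add (a := Qof N₁ q S x) (b := Qof N₂ q' S' (x - S N₁)) hn1 hn2
  convert this using 2
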